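/- Let F : C ⟶ D be a functor over a groupoid S (i.e., functors p : C ⟶ S and q : D ⟶ S with q ∘ F = p, where S is a groupoid and p, q are isofibrations). If for every object s of S the induced functor between fibers F_s : C_s ⟶ D_s has a right adjoint, then F itself has a right adjoint. -/

import Mathlib

open CategoryTheory

universe v₁ v₂ v₃ u₁ u₂ u₃

variable {C : Type u₁} [Category.{v₁} C] {D : Type u₂} [Category.{v₂} D]
  {S : Type u₃} [Groupoid.{v₃} S]

/-- A functor is an isofibration if every isomorphism in the base whose source is
in the image lifts to an isomorphism in the total category. -/
def IsIsofibration {C : Type u₁} [Category.{v₁} C] {S : Type u₃} [Category.{v₃} S]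
    (p : C ⥤ S) : Prop :=
  ∀ {c : C} {s : S} (e : p.obj c ≅ s),
    ∃ (c' : C) (e' : c ≅ c') (h : p.obj c' = s), p.mapIso e' = e ≪≫ eqToIso h.symm

/-- The fiber of a functor `p : C ⥤ S` over an object `s : S`: objects of `C`
mapping to `s` and morphisms mapping to the identity of `s`. -/
structure Fiber {C : Type u₁} [Category.{v₁} C] {S : Type u₃} [Category.{v₃} S]
    (p : C ⥤ S) (s : S) where
  obj : C
  eq : p.obj obj = s

instance {C : Type u₁} [Category.{v₁} C] {S : Type u₃} [Category.{v₃} S]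
    (p : C ⥤ S) (s : S) : Category (Fiber p s) where
  Hom a b := { φ : a.obj ⟶ b.obj // p.map φ = eqToHom (a.eq.trans b.eq.symm) }
  id a := ⟨𝟙 _, by simp⟩
  comp φ ψ := ⟨φ.1 ≫ ψ.1, by simp [φ.2, ψ.2]⟩
  id_comp φ := Subtype.ext (by simp)
  comp_id φ := Subtype.ext (by simp)
  assoc φ ψ χ := Subtype.ext (by simp)

/-- The functor between fibers induced by a functor `F : C ⥤ D` over `S`. -/
def fiberFunctor {C : Type u₁} [Category.{v₁} C] {D : Type u₂} [Category.{v₂} D]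
    {S : Type u₃} [Category.{v₃} S] (p : C ⥤ S) (q : D ⥤ S) (F : C ⥤ D)
    (hcomm : F ⋙ q = p) (s : S) : Fiber p s ⥤ Fiber q s where
  obj a := ⟨F.obj a.obj, by subst hcomm; exact a.eq⟩
  map {a b} φ := ⟨F.map φ.1, by subst hcomm; exact φ.2⟩
  map_id a := Subtype.ext (F.map_id a.obj)
  map_comp φ ψ := Subtype.ext (F.map_comp φ.1 ψ.1)

/-- Let `F : C ⟶ D` be a functor over a groupoid `S` (via isofibrations `p`, `q`
with `q ∘ F = p`).  If for every object `s` of `S` the induced functor between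
fibers has a right adjoint, then `F` has a right adjoint. -/
theorem hasRightAdjoint_of_fiberwise {p : C ⥤ S} {q : D ⥤ S} (F : C ⥤ D)
    (hcomm : F ⋙ q = p) (hp : IsIsofibration p) (hq : IsIsofibration q)
    (hfib : ∀ s : S, (fiberFunctor p q F hcomm s).IsLeftAdjoint) :
    F.IsLeftAdjoint := by
  subst hcomm
  have key : ∀ d : D, Limits.HasTerminal (CostructuredArrow F d) := by
    intro d
    set s := q.obj d with hs
    let Fs := fiberFunctor (F ⋙ q) q F rfl s
    have inst : Fs.IsLeftAdjoint := hfib s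
    let G := Fs.rightAdjoint
    let adj : Fs ⊣ G := Adjunction.ofIsLeftAdjoint Fs
    let dd : Fiber q s := ⟨d, rfl⟩
    let ε : Fs.obj (G.obj dd) ⟶ dd := adj.counit.app dd
    let T : CostructuredArrow F d := CostructuredArrow.mk (ε.1 : F.obj (G.obj dd).obj ⟶ d)
    -- data for each X
    have main : ∀ X : CostructuredArrow F d, ∃ (m : X ⟶ T), ∀ m' : X ⟶ T, m' = m := by
      intro X
      obtain ⟨c'', e', h, pe'⟩ := hp (c := X.left) (s := s) (asIso (q.map X.hom))
      have hinv : q.map (F.map e'.inv) = eqToHom h ≫ inv (q.map X.hom) := by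
        have := congrArg Iso.inv pe'
        simp only [Functor.mapIso_inv, Iso.trans_inv, eqToIso.inv, asIso_inv] at this
        simpa using this
      let cF : Fiber (F ⋙ q) s := ⟨c'', h⟩
      let g' : Fs.obj cF ⟶ dd := ⟨F.map e'.inv ≫ X.hom, by
        erw [q.map_comp, hinv]
        erw [Category.assoc, IsIso.inv_hom_id, Category.comp_id]
        rfl⟩
      let φ : cF ⟶ G.obj dd := adj.homEquiv cF dd g'
      have hφ : Fs.map φ ≫ ε = g' := by
        have h1 : (adj.homEquiv cF dd).symm φ = Fs.map φ ≫ adj.counit.app dd :=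
          adj.homEquiv_counit cF dd φ
        show Fs.map φ ≫ adj.counit.app dd = g'
        rw [← h1]
        simp [φ]
      have hφ1 : F.map φ.1 ≫ ε.1 = F.map e'.inv ≫ X.hom := congrArg Subtype.val hφ
      refine ⟨CostructuredArrow.homMk (e'.hom ≫ φ.1) ?_, ?_⟩
      · show F.map (e'.hom ≫ φ.1) ≫ ε.1 = X.hom
        erw [F.map_comp, Category.assoc, hφ1, ← Category.assoc, ← F.map_comp,
          e'.hom_inv_id, F.map_id, Category.id_comp]
      · intro m
        have hm : F.map m.left ≫ ε.1 = X.hom := m.w.trans (Category.comp_id X.hom)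
        have qm : q.map (F.map m.left) =
            q.map X.hom ≫ eqToHom ((Fs.obj (G.obj dd)).eq.trans dd.eq.symm).symm := by
          have := congrArg q.map hm
          erw [q.map_comp, ε.2] at this
          rw [← this]
          erw [Category.assoc, eqToHom_trans, eqToHom_refl, Category.comp_id]
        let ψ : cF ⟶ G.obj dd := ⟨e'.inv ≫ m.left, by
          show q.map (F.map (e'.inv ≫ m.left)) = _
          rw [F.map_comp, q.map_comp, hinv, qm]
          erw [Category.assoc, IsIso.inv_hom_id_assoc, eqToHom_trans]⟩
        have hψ : (adj.homEquiv cF dd).symm ψ = g' := by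
          rw [adj.homEquiv_counit]
          apply Subtype.ext
          show F.map (e'.inv ≫ m.left) ≫ ε.1 = F.map e'.inv ≫ X.hom
          erw [F.map_comp, Category.assoc, hm]
        have hψφ : ψ = φ := by
          apply (adj.homEquiv cF dd).symm.injective
          rw [hψ]
          simp [φ]
        have hml : m.left = e'.hom ≫ φ.1 := by
          have : e'.inv ≫ m.left = φ.1 := congrArg Subtype.val hψφ
          rw [← this, ← Category.assoc, e'.hom_inv_id, Category.id_comp]
        exact CostructuredArrow.hom_ext _ _ hml
    exact Limits.IsTerminal.hasTerminal
      (Limits.IsTerminal.ofUniqueHom (fun X => (main X).choose) (fun X m => (main X).choose_spec m))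
  exact isLeftAdjoint_of_costructuredArrowTerminals F
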